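/- Let u and v be words over an alphabet Σ and let i, j be natural numbers with 0 ≤ i < j < |u| and |u| ≤ i + |v|. Then the following are equivalent: (1) the suffix u[i:] is a prefix of v and the suffix u[j:] is a prefix of v; (2) the suffix u[i:] is a prefix of v and j − i is a period of the word u[i:]. -/

import Mathlib

/-- `p` is a period of the word `u`: `1 ≤ p ≤ |u| - 1` and `u[i] = u[i+p]`
for all valid indices `i`. -/
def IsPeriod {α : Type*} (u : List α) (p : ℕ) : Prop :=
  1 ≤ p ∧ p ≤ u.length - 1 ∧
    ∀ (i : ℕ) (h : i + p < u.length),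
      u[i]'(Nat.lt_of_le_of_lt (Nat.le_add_right i p) h) = u[i + p]'h

/-- Two overlap assertions `(u, v, i)` and `(u, v, j)` with `i < j` are both
satisfied if and only if the first is satisfied and `j - i` is a period of `u[i:]`. -/
theorem overlap_pair_iff_period {α : Type*} (u v : List α) (i j : ℕ)
    (hij : i < j) (hj : j < u.length) (hov : u.length ≤ i + v.length) :
    (u.drop i <+: v ∧ u.drop j <+: v) ↔
      (u.drop i <+: v ∧ IsPeriod (u.drop i) (j - i)) := by
  have hLi : (u.drop i).length = u.length - i := List.length_drop
  have hLj : (u.drop j).length = u.length - j := List.length_drop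
  constructor
  · rintro ⟨h1, h2⟩
    refine ⟨h1, ⟨by omega, by omega, ?_⟩⟩
    intro k hk
    have hk' : i + k < u.length := by omega
    have hk'' : j + k < u.length := by omega
    have e1 : (u.drop i)[k]'(by omega) = v[k]'(by omega) := h1.getElem _
    have e2 : (u.drop i)[k + (j - i)]'hk = (u.drop j)[k]'(by omega) := by
      simp only [List.getElem_drop]
      congr 1
      omega
    have e3 : (u.drop j)[k]'(by omega) = v[k]'(by omega) := h2.getElem _
    rw [e1, e2, e3]
  · rintro ⟨h1, ⟨hp1, hp2, hper⟩⟩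
    refine ⟨h1, ?_⟩
    rw [List.prefix_iff_eq_take]
    apply List.ext_getElem (by simp; omega)
    intro k hk hk'
    have hkj : j + k < u.length := by simp [hLj] at hk; omega
    have e2 : (u.drop j)[k]'hk = (u.drop i)[k + (j - i)]'(by omega) := by
      simp only [List.getElem_drop]
      congr 1
      omega
    have e1 : (u.drop i)[k]'(by omega) = (u.drop i)[k + (j - i)]'(by omega) :=
      hper k (by omega)
    have e0 : (u.drop i)[k]'(by omega) = v[k]'(by omega) := h1.getElem _
    rw [e2, ← e1, e0]
    simp [hkj]
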